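/- arXiv:2005.02126 — 7 statements merged into one kernel-verified Lean document; each statement's English description precedes it below -/
import Mathlib

section
/- Soundness of the robust semantics of discrete-time STL for infinite signals: for every STL formula φ over a finite set Y of variables, every infinite signal σ = u₀,u₁,… ∈ (ℝ^Y)^ω, and every k ∈ ℕ, if ρ(φ,σ,k) > 0 then (σ,k) ⊨ φ. -/
namespace STLpaper

/-- Discrete-time STL formulas over a set `Y` of variables:
`⊤ | y > c | y < c | ¬φ | φ ∨ φ' | 𝒳 φ | φ U_{[i,j]} φ'` with `i ≤ j`, `i j ∈ ℕ ∪ {+∞}`. -/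
inductive STL (Y : Type) : Type where
  | top : STL Y
  | gt : Y → ℝ → STL Y
  | lt : Y → ℝ → STL Y
  | neg : STL Y → STL Y
  | or : STL Y → STL Y → STL Y
  | next : STL Y → STL Y
  | untl : (i j : ℕ∞) → i ≤ j → STL Y → STL Y → STL Y

variable {Y : Type}

/-- The satisfaction relation `(σ, k) ⊨ φ` for an infinite signal `σ : ℕ → Y → ℝ`. -/
def Sat (σ : ℕ → Y → ℝ) : STL Y → ℕ → Prop
  | .top, _ => True
  | .gt y c, k => σ k y > c
  | .lt y c, k => σ k y < c
  | .neg φ, k => ¬ Sat σ φ k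
  | .or φ ψ, k => Sat σ φ k ∨ Sat σ ψ k
  | .next φ, k => Sat σ φ (k + 1)
  | .untl i j _ φ ψ, k =>
      ∃ l : ℕ, ((k : ℕ∞) + i ≤ (l : ℕ∞) ∧ (l : ℕ∞) ≤ (k : ℕ∞) + j) ∧
        Sat σ ψ l ∧ ∀ m : ℕ, k ≤ m → m ≤ l → Sat σ φ m

/-- The robust semantics `ρ(φ, σ, k) ∈ ℝ ∪ {±∞}` for an infinite signal `σ`. -/
noncomputable def Rob (σ : ℕ → Y → ℝ) : STL Y → ℕ → EReal
  | .top, _ => ⊤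
  | .gt y c, k => ((σ k y - c : ℝ) : EReal)
  | .lt y c, k => ((-(σ k y) + c : ℝ) : EReal)
  | .neg φ, k => - Rob σ φ k
  | .or φ ψ, k => max (Rob σ φ k) (Rob σ ψ k)
  | .next φ, k => Rob σ φ (k + 1)
  | .untl i j _ φ ψ, k =>
      ⨆ l ∈ {l : ℕ | (k : ℕ∞) + i ≤ (l : ℕ∞) ∧ (l : ℕ∞) ≤ (k : ℕ∞) + j},
        min (Rob σ ψ l) (⨅ m ∈ Finset.Icc k l, Rob σ φ m)

/-- Concatenation `σ · σ'` of a finite signal with an infinite one. -/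
def cat (σ : List (Y → ℝ)) (σ' : ℕ → Y → ℝ) : ℕ → Y → ℝ :=
  fun n => if h : n < σ.length then σ.get ⟨n, h⟩ else σ' (n - σ.length)

/-- Supremum finite semantics `⟦φ⟧_sup`. -/
def supSem (φ : STL Y) : Set (List (Y → ℝ)) :=
  {σ | ∃ σ' : ℕ → Y → ℝ, Sat (cat σ σ') φ 0}

/-- Infimum finite semantics `⟦φ⟧_inf`. -/
def infSem (φ : STL Y) : Set (List (Y → ℝ)) :=
  {σ | ∀ σ' : ℕ → Y → ℝ, Sat (cat σ σ') φ 0}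

/-- Upper end of the robust satisfaction interval `RoSI(φ, σ, k)`. -/
noncomputable def RoSIsup (φ : STL Y) (σ : List (Y → ℝ)) (k : ℕ) : EReal :=
  ⨆ σ' : ℕ → Y → ℝ, Rob (cat σ σ') φ k

/-- Lower end of the robust satisfaction interval `RoSI(φ, σ, k)`. -/
noncomputable def RoSIinf (φ : STL Y) (σ : List (Y → ℝ)) (k : ℕ) : EReal :=
  ⨅ σ' : ℕ → Y → ℝ, Rob (cat σ σ') φ k

/-- The inductively computed interval `[ρ](φ, σ, k)`, as a pair `(inf, sup)`. -/
noncomputable def finRob (σ : List (Y → ℝ)) : STL Y → ℕ → EReal × EReal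
  | .top, _ => (⊤, ⊤)
  | .gt y c, k =>
      if h : k < σ.length then
        (((σ.get ⟨k, h⟩ y - c : ℝ) : EReal), ((σ.get ⟨k, h⟩ y - c : ℝ) : EReal))
      else (⊥, ⊤)
  | .lt y c, k =>
      if h : k < σ.length then
        (((-(σ.get ⟨k, h⟩ y) + c : ℝ) : EReal), ((-(σ.get ⟨k, h⟩ y) + c : ℝ) : EReal))
      else (⊥, ⊤)
  | .neg φ, k => (- (finRob σ φ k).2, - (finRob σ φ k).1)
  | .or φ ψ, k =>
      (max (finRob σ φ k).1 (finRob σ ψ k).1, max (finRob σ φ k).2 (finRob σ ψ k).2)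
  | .next φ, k => finRob σ φ (k + 1)
  | .untl i j _ φ ψ, k =>
      (⨆ l ∈ {l : ℕ | (k : ℕ∞) + i ≤ (l : ℕ∞) ∧ (l : ℕ∞) ≤ (k : ℕ∞) + j},
          min ((finRob σ ψ l).1) (⨅ m ∈ Finset.Icc k l, (finRob σ φ m).1),
       ⨆ l ∈ {l : ℕ | (k : ℕ∞) + i ≤ (l : ℕ∞) ∧ (l : ℕ∞) ≤ (k : ℕ∞) + j},
          min ((finRob σ ψ l).2) (⨅ m ∈ Finset.Icc k l, (finRob σ φ m).2))

theorem rob_sound_aux (σ : ℕ → Y → ℝ) :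
    ∀ φ : STL Y, ∀ k, (0 < Rob σ φ k → Sat σ φ k) ∧ (Sat σ φ k → 0 ≤ Rob σ φ k) := by
  intro φ
  induction φ with
  | top => intro k; simp [Rob, Sat]
  | gt y c =>
    intro k
    constructor
    · intro h
      simp only [Rob] at h
      have : (0:ℝ) < σ k y - c := by exact_mod_cast h
      simpa [Sat] using by linarith
    · intro h
      simp only [Sat] at h
      simp only [Rob]
      have : (0:ℝ) ≤ σ k y - c := by linarith
      exact_mod_cast this
  | lt y c =>
    intro k
    constructor
    · intro h
      simp only [Rob] at h
      have : (0:ℝ) < -(σ k y) + c := by exact_mod_cast h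
      simpa [Sat] using by linarith
    · intro h
      simp only [Sat] at h
      simp only [Rob]
      have : (0:ℝ) ≤ -(σ k y) + c := by linarith
      exact_mod_cast this
  | neg φ ih =>
    intro k
    constructor
    · intro h
      simp only [Rob] at h
      intro hs
      have := (ih k).2 hs
      have hlt : Rob σ φ k < 0 := by
        rw [show (0:EReal) = -0 by simp] at h
        exact EReal.neg_lt_neg_iff.mp h
      exact absurd this (not_le.2 hlt)
    · intro h
      simp only [Sat] at h
      simp only [Rob]
      have : ¬ (0 < Rob σ φ k) := fun h' => h ((ih k).1 h')
      have hle : Rob σ φ k ≤ 0 := not_lt.1 this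
      rw [show (0:EReal) = -0 by simp]
      exact EReal.neg_le_neg_iff.mpr hle
  | or φ ψ ihφ ihψ =>
    intro k
    constructor
    · intro h
      simp only [Rob, lt_max_iff] at h
      rcases h with h | h
      · exact Or.inl ((ihφ k).1 h)
      · exact Or.inr ((ihψ k).1 h)
    · intro h
      simp only [Rob]
      rcases h with h | h
      · exact le_max_of_le_left ((ihφ k).2 h)
      · exact le_max_of_le_right ((ihψ k).2 h)
  | next φ ih =>
    intro k
    exact ⟨fun h => (ih (k+1)).1 h, fun h => (ih (k+1)).2 h⟩
  | untl i j hij φ ψ ihφ ihψ =>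
    intro k
    constructor
    · intro h
      simp only [Rob, lt_iSup_iff] at h
      obtain ⟨l, hl, hmin⟩ := h
      rw [lt_min_iff] at hmin
      refine ⟨l, hl, (ihψ l).1 hmin.1, fun m hkm hml => ?_⟩
      have hmem : m ∈ Finset.Icc k l := Finset.mem_Icc.2 ⟨hkm, hml⟩
      exact (ihφ m).1 (lt_of_lt_of_le hmin.2 (iInf₂_le m hmem))
    · rintro ⟨l, hl, hsψ, hall⟩
      simp only [Rob]
      refine le_trans ?_ (le_iSup₂_of_le l hl le_rfl)
      refine le_min ((ihψ l).2 hsψ) (le_iInf₂ fun m hm => ?_)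
      rw [Finset.mem_Icc] at hm
      exact (ihφ m).2 (hall m hm.1 hm.2)

end STLpaper

open STLpaper in
/-- Soundness of the robust semantics for infinite signals:
if `ρ(φ,σ,k) > 0` then `(σ,k) ⊨ φ`. -/
theorem robust_soundness_infinite (Y : Type) [Fintype Y] (φ : STL Y)
    (σ : ℕ → Y → ℝ) (k : ℕ) (h : 0 < Rob σ φ k) : Sat σ φ k := by
  exact (rob_sound_aux σ φ k).1 h
end

section
/- Completeness of the robust semantics of discrete-time STL for infinite signals: for every STL formula φ over a finite set Y of variables, every infinite signal σ = u₀,u₁,… ∈ (ℝ^Y)^ω, and every k ∈ ℕ, if (σ,k) ⊨ φ then ρ(φ,σ,k) ≥ 0. -/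
namespace STLpaper

lemma rob_both (σ : ℕ → Y → ℝ) (φ : STL Y) :
    ∀ k, (Sat σ φ k → 0 ≤ Rob σ φ k) ∧ (¬ Sat σ φ k → Rob σ φ k ≤ 0) := by
  induction φ with
  | top =>
    intro k; constructor
    · intro _; exact le_top
    · intro h; exact absurd trivial h
  | gt y c =>
    intro k; constructor
    · intro h; simp only [Sat] at h; simp only [Rob]
      exact_mod_cast sub_nonneg.mpr (le_of_lt h)
    · intro h; simp only [Sat, not_lt] at h; simp only [Rob]
      exact_mod_cast by linarith
  | lt y c =>
    intro k; constructor
    · intro h; simp only [Sat] at h; simp only [Rob]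
      exact_mod_cast by linarith
    · intro h; simp only [Sat, not_lt] at h; simp only [Rob]
      exact_mod_cast by linarith
  | neg φ ih =>
    intro k; constructor
    · intro h; simp only [Rob]
      exact EReal.le_neg_of_le_neg (by simpa using (ih k).2 h)
    · intro h; simp only [Rob]
      exact EReal.neg_le.mpr (by simpa using (ih k).1 (not_not.mp h))
  | or φ ψ ihφ ihψ =>
    intro k; constructor
    · intro h
      rcases h with h | h
      · exact le_max_of_le_left ((ihφ k).1 h)
      · exact le_max_of_le_right ((ihψ k).1 h)
    · intro h
      simp only [Sat, not_or] at h
      exact max_le ((ihφ k).2 h.1) ((ihψ k).2 h.2)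
  | next φ ih =>
    intro k
    exact ⟨fun h => ((ih (k+1)).1 h), fun h => ((ih (k+1)).2 h)⟩
  | untl i j hij φ ψ ihφ ihψ =>
    intro k; constructor
    · rintro ⟨l, hl, hψ, hφ⟩
      simp only [Rob]
      refine le_trans ?_ (le_iSup₂ (f := fun l _ =>
        min (Rob σ ψ l) (⨅ m ∈ Finset.Icc k l, Rob σ φ m)) l hl)
      refine le_min ((ihψ l).1 hψ) ?_
      refine le_iInf₂ fun m hm => ?_
      simp only [Finset.mem_Icc] at hm
      exact (ihφ m).1 (hφ m hm.1 hm.2)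
    · intro h
      simp only [Rob]
      refine iSup₂_le fun l hl => ?_
      by_cases hψl : Sat σ ψ l
      · by_cases hall : ∀ m : ℕ, k ≤ m → m ≤ l → Sat σ φ m
        · exact absurd ⟨l, hl, hψl, hall⟩ h
        · push_neg at hall
          obtain ⟨m, hm1, hm2, hm3⟩ := hall
          refine le_trans (min_le_right _ _) ?_
          refine le_trans (iInf₂_le m (Finset.mem_Icc.mpr ⟨hm1, hm2⟩)) ?_
          exact (ihφ m).2 hm3
      · exact le_trans (min_le_left _ _) ((ihψ l).2 hψl)

end STLpaper

open STLpaper in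
/-- Completeness of the robust semantics for infinite signals:
if `(σ,k) ⊨ φ` then `ρ(φ,σ,k) ≥ 0`. -/
theorem robust_completeness_infinite (Y : Type) [Fintype Y] (φ : STL Y)
    (σ : ℕ → Y → ℝ) (k : ℕ) (h : Sat σ φ k) : 0 ≤ Rob σ φ k := by
  exact (rob_both σ φ k).1 h
end

section
/- Soundness of the upper end of the robust satisfaction interval: for every STL formula φ over a finite set Y of variables, every finite signal σ = u₀,…,u_{n−1} ∈ (ℝ^Y)^*, and every k ∈ ℕ, if sup(RoSI(φ,σ,k)) > 0 then the suffix σ[k..|σ|−1] belongs to the supremum finite semantics ⟦φ⟧_sup. -/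
namespace STLpaper

variable {Y : Type}

lemma sat_shift (ρ : ℕ → Y → ℝ) (k : ℕ) :
    ∀ (φ : STL Y) (m : ℕ), Sat (fun n => ρ (n + k)) φ m ↔ Sat ρ φ (m + k) := by
  intro φ
  induction φ with
  | top => intro m; simp [Sat]
  | gt y c => intro m; simp [Sat]
  | lt y c => intro m; simp [Sat]
  | neg φ ih => intro m; simp [Sat, ih]
  | or φ ψ ih1 ih2 => intro m; simp [Sat, ih1, ih2]
  | next φ ih =>
      intro m
      have := ih (m + 1)
      simpa [Sat, Nat.add_right_comm] using this
  | untl i j hij φ ψ ih1 ih2 =>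
      intro m
      constructor
      · rintro ⟨l, ⟨h1, h2⟩, hψ, hφ⟩
        refine ⟨l + k, ⟨?_, ?_⟩, ?_, ?_⟩
        · push_cast
          calc ((m : ℕ∞) + k) + i = ((m : ℕ∞) + i) + k := by ring
            _ ≤ (l : ℕ∞) + k := add_le_add_left h1 _
        · push_cast
          calc (l : ℕ∞) + k ≤ ((m : ℕ∞) + j) + k := add_le_add_left h2 _
            _ = ((m : ℕ∞) + k) + j := by ring
        · exact (ih2 l).mp hψ
        · intro m'' hm1 hm2
          have hk : k ≤ m'' := le_trans (Nat.le_add_left k m) hm1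
          obtain ⟨m', rfl⟩ : ∃ m', m'' = m' + k := ⟨m'' - k, by omega⟩
          exact (ih1 m').mp (hφ m' (by omega) (by omega))
      · rintro ⟨l', ⟨h1, h2⟩, hψ, hφ⟩
        have hk : m + k ≤ l' := by
          have : ((m + k : ℕ) : ℕ∞) ≤ (l' : ℕ∞) :=
            le_trans (le_add_right le_rfl) h1
          exact_mod_cast this
        obtain ⟨l, rfl⟩ : ∃ l, l' = l + k := ⟨l' - k, by omega⟩
        refine ⟨l, ⟨?_, ?_⟩, ?_, ?_⟩
        · have : ((m : ℕ∞) + i) + k ≤ (l : ℕ∞) + k := by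
            calc ((m : ℕ∞) + i) + k = ((m + k : ℕ) : ℕ∞) + i := by push_cast; ring
              _ ≤ ((l + k : ℕ) : ℕ∞) := h1
              _ = (l : ℕ∞) + k := by push_cast; ring
          exact (WithTop.add_le_add_iff_right (by simp : (k:ℕ∞) ≠ ⊤)).mp this
        · have : (l : ℕ∞) + k ≤ ((m : ℕ∞) + j) + k := by
            calc (l : ℕ∞) + k = ((l + k : ℕ) : ℕ∞) := by push_cast; ring
              _ ≤ ((m + k : ℕ) : ℕ∞) + j := h2
              _ = ((m : ℕ∞) + j) + k := by push_cast; ring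
          exact (WithTop.add_le_add_iff_right (by simp : (k:ℕ∞) ≠ ⊤)).mp this
        · exact (ih2 l).mpr hψ
        · intro m' hm1 hm2
          exact (ih1 m').mpr (hφ (m' + k) (by omega) (by omega))

lemma rob_sat (φ : STL Y) : ∀ (σ : ℕ → Y → ℝ) (k : ℕ),
    (0 < Rob σ φ k → Sat σ φ k) ∧ (Rob σ φ k < 0 → ¬ Sat σ φ k) := by
  induction φ with
  | top => intro σ k; simp [Rob, Sat]
  | gt y c =>
      intro σ k
      constructor
      · intro h; rw [Rob] at h; have : (0:ℝ) < σ k y - c := by exact_mod_cast h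
        simpa [Sat] using by linarith
      · intro h; rw [Rob] at h; have : (σ k y - c : ℝ) < 0 := by exact_mod_cast h
        simp only [Sat, gt_iff_lt, not_lt]; linarith
  | lt y c =>
      intro σ k
      constructor
      · intro h; rw [Rob] at h; have : (0:ℝ) < -(σ k y) + c := by exact_mod_cast h
        simpa [Sat] using by linarith
      · intro h; rw [Rob] at h; have : (-(σ k y) + c : ℝ) < 0 := by exact_mod_cast h
        simp only [Sat, not_lt]; linarith
  | neg φ ih =>
      intro σ k
      constructor
      · intro h
        rw [Rob] at h
        have : Rob σ φ k < 0 := by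
          rwa [← neg_zero, EReal.neg_lt_neg_iff] at h
        exact (ih σ k).2 this
      · intro h hs
        rw [Rob] at h
        have h0 : 0 < Rob σ φ k := by
          rwa [← neg_zero, EReal.neg_lt_neg_iff] at h
        exact hs ((ih σ k).1 h0)
  | or φ ψ ih1 ih2 =>
      intro σ k
      constructor
      · intro h
        rw [Rob] at h
        rcases lt_max_iff.mp h with h | h
        · exact Or.inl ((ih1 σ k).1 h)
        · exact Or.inr ((ih2 σ k).1 h)
      · intro h hs
        rw [Rob] at h
        rcases max_lt_iff.mp h with ⟨h1, h2⟩
        rcases hs with hs | hs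
        · exact (ih1 σ k).2 h1 hs
        · exact (ih2 σ k).2 h2 hs
  | next φ ih =>
      intro σ k
      exact ih σ (k + 1)
  | untl i j hij φ ψ ih1 ih2 =>
      intro σ k
      constructor
      · intro h
        rw [Rob] at h
        obtain ⟨l, hl, hmin⟩ : ∃ l ∈ {l : ℕ | (k : ℕ∞) + i ≤ (l : ℕ∞) ∧ (l : ℕ∞) ≤ (k : ℕ∞) + j},
            0 < min (Rob σ ψ l) (⨅ m ∈ Finset.Icc k l, Rob σ φ m) := by
          by_contra hc
          push_neg at hc
          exact absurd (iSup₂_le hc) (not_le.mpr h)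
        rcases lt_min_iff.mp hmin with ⟨hψ, hφ⟩
        refine ⟨l, hl, (ih2 σ l).1 hψ, fun m hm1 hm2 => ?_⟩
        have : 0 < Rob σ φ m :=
          lt_of_lt_of_le hφ (iInf₂_le m (Finset.mem_Icc.mpr ⟨hm1, hm2⟩))
        exact (ih1 σ m).1 this
      · intro h hs
        rw [Rob] at h
        rcases hs with ⟨l, hl, hψ, hφ⟩
        have hle : min (Rob σ ψ l) (⨅ m ∈ Finset.Icc k l, Rob σ φ m) ≤
            ⨆ l ∈ {l : ℕ | (k : ℕ∞) + i ≤ (l : ℕ∞) ∧ (l : ℕ∞) ≤ (k : ℕ∞) + j},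
              min (Rob σ ψ l) (⨅ m ∈ Finset.Icc k l, Rob σ φ m) :=
          le_iSup₂ (f := fun l _ => min (Rob σ ψ l) (⨅ m ∈ Finset.Icc k l, Rob σ φ m)) l hl
        have hmin : min (Rob σ ψ l) (⨅ m ∈ Finset.Icc k l, Rob σ φ m) < 0 :=
          lt_of_le_of_lt hle h
        rcases min_lt_iff.mp hmin with h1 | h1
        · exact (ih2 σ l).2 h1 hψ
        · obtain ⟨m, hm, hm0⟩ : ∃ m ∈ Finset.Icc k l, Rob σ φ m < 0 := by
            by_contra hc
            push_neg at hc
            exact absurd (le_iInf₂ hc) (not_le.mpr h1)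
          rcases Finset.mem_Icc.mp hm with ⟨hm1, hm2⟩
          exact (ih1 σ m).2 hm0 (hφ m hm1 hm2)

lemma cat_drop (σ : List (Y → ℝ)) (σ' : ℕ → Y → ℝ) (k : ℕ) :
    cat (σ.drop k) (fun m => cat σ σ' (m + (σ.drop k).length + k))
      = fun n => cat σ σ' (n + k) := by
  funext n
  by_cases h1 : n < (σ.drop k).length
  · have h1' : n < σ.length - k := by simpa using h1
    have h2 : n + k < σ.length := by omega
    simp only [cat, List.length_drop, dif_pos h1', dif_pos h2]
    simp only [List.get_eq_getElem, List.getElem_drop]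
    congr 1
    omega
  · have h1' : ¬ n < σ.length - k := by simpa using h1
    have harg : n - (σ.length - k) + (σ.length - k) + k = n + k := by omega
    simp only [cat, List.length_drop, dif_neg h1', harg]

end STLpaper

open STLpaper in
/-- Soundness of the upper end of the robust satisfaction interval:
if `sup(RoSI(φ,σ,k)) > 0` then `σ[k..|σ|−1] ∈ ⟦φ⟧_sup`. -/
theorem RoSIsup_pos_mem_supSem (Y : Type) [Fintype Y] (φ : STL Y)
    (σ : List (Y → ℝ)) (k : ℕ) (h : 0 < RoSIsup φ σ k) :
    σ.drop k ∈ supSem φ := by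
  rw [RoSIsup, lt_iSup_iff] at h
  obtain ⟨σ', hσ'⟩ := h
  have hsat : Sat (cat σ σ') φ k := (rob_sat φ (cat σ σ') k).1 hσ'
  have h0 : Sat (fun n => cat σ σ' (n + k)) φ 0 := by
    rw [sat_shift]; simpa using hsat
  refine ⟨fun m => cat σ σ' (m + (σ.drop k).length + k), ?_⟩
  rw [cat_drop]
  exact h0
end

section
/- Completeness of the lower end of the robust satisfaction interval: for every STL formula φ over a finite set Y of variables, every finite signal σ = u₀,…,u_{n−1} ∈ (ℝ^Y)^*, and every k ∈ ℕ, if the suffix σ[k..|σ|−1] belongs to the infimum finite semantics ⟦φ⟧_inf then inf(RoSI(φ,σ,k)) ≥ 0. -/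
namespace STLpaper

variable {Y : Type}

lemma iInf_Icc_shift (f : ℕ → EReal) (k a b : ℕ) :
    (⨅ x ∈ Finset.Icc a b, f (k + x)) = ⨅ x ∈ Finset.Icc (k + a) (k + b), f x := by
  apply le_antisymm
  · refine le_iInf₂ fun x hx => ?_
    have hx' := Finset.mem_Icc.mp hx
    have hk : k ≤ x := le_trans (Nat.le_add_right k a) hx'.1
    have hxe : f x = f (k + (x - k)) := by rw [Nat.add_sub_cancel' hk]
    rw [hxe]
    exact iInf₂_le (x - k) (Finset.mem_Icc.mpr ⟨by omega, by omega⟩)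
  · refine le_iInf₂ fun x hx => ?_
    have hx' := Finset.mem_Icc.mp hx
    exact iInf₂_le (k + x) (Finset.mem_Icc.mpr ⟨by omega, by omega⟩)

lemma mem_shift_iff (k m l : ℕ) (i j : ℕ∞) :
    (((m : ℕ∞) + i ≤ (l : ℕ∞) ∧ (l : ℕ∞) ≤ (m : ℕ∞) + j)) ↔
    (((k + m : ℕ) : ℕ∞) + i ≤ ((k + l : ℕ) : ℕ∞) ∧
      ((k + l : ℕ) : ℕ∞) ≤ ((k + m : ℕ) : ℕ∞) + j) := by
  push_cast
  rw [add_assoc, add_assoc,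
    ENat.add_le_add_iff_left (by simp : (k : ℕ∞) ≠ ⊤),
    ENat.add_le_add_iff_left (by simp : (k : ℕ∞) ≠ ⊤)]

lemma rob_shift (σ : ℕ → Y → ℝ) (k : ℕ) (φ : STL Y) :
    ∀ m, Rob (fun n => σ (k + n)) φ m = Rob σ φ (k + m) := by
  induction φ with
  | top => intro m; rfl
  | gt y c => intro m; rfl
  | lt y c => intro m; rfl
  | neg φ ih => intro m; simp only [Rob, ih]
  | or φ ψ ih1 ih2 => intro m; simp only [Rob, ih1, ih2]
  | next φ ih =>
      intro m
      simp only [Rob, ih (m + 1)]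
      rw [add_assoc]
  | untl i j hij φ ψ ih1 ih2 =>
      intro m
      simp only [Rob, ih1, ih2, iInf_Icc_shift (fun x => Rob σ φ x) k m]
      apply le_antisymm
      · refine iSup₂_le fun l hl => ?_
        exact le_iSup₂ (f := fun l' _ => min (Rob σ ψ l')
          (⨅ x ∈ Finset.Icc (k + m) l', Rob σ φ x)) (k + l) ((mem_shift_iff k m l i j).mp hl)
      · refine iSup₂_le fun l' hl' => ?_
        have hk : k ≤ l' := by
          have h1 : (k : ℕ∞) ≤ (l' : ℕ∞) :=
            le_trans (le_add_of_nonneg_right (zero_le (a := _)))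
              (le_trans (le_of_eq (by push_cast; rw [add_assoc])) hl'.1)
          exact_mod_cast h1
        have hl'' : k + (l' - k) = l' := by omega
        have hmem : l' - k ∈ {l : ℕ | (m : ℕ∞) + i ≤ (l : ℕ∞) ∧ (l : ℕ∞) ≤ (m : ℕ∞) + j} := by
          rw [Set.mem_setOf_eq, mem_shift_iff k m (l' - k) i j, hl'']
          exact hl'
        refine le_trans (le_of_eq ?_) (le_iSup₂ (l' - k) hmem)
        rw [hl'']

lemma sat_rob (φ : STL Y) : ∀ (σ : ℕ → Y → ℝ) (k : ℕ),
    (Sat σ φ k → 0 ≤ Rob σ φ k) ∧ (¬ Sat σ φ k → Rob σ φ k ≤ 0) := by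
  induction φ with
  | top =>
      intro σ k
      exact ⟨fun _ => le_top, fun h => absurd trivial h⟩
  | gt y c =>
      intro σ k
      constructor
      · intro h
        have h2 : (0 : ℝ) ≤ σ k y - c := by simp only [Sat] at h; linarith
        simp only [Rob]; exact_mod_cast h2
      · intro h
        simp only [Sat, gt_iff_lt, not_lt] at h
        have h2 : σ k y - c ≤ (0 : ℝ) := by linarith
        simp only [Rob]; exact_mod_cast h2
  | lt y c =>
      intro σ k
      constructor
      · intro h
        simp only [Sat] at h
        have h2 : (0 : ℝ) ≤ -(σ k y) + c := by linarith
        simp only [Rob]; exact_mod_cast h2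
      · intro h
        simp only [Sat, not_lt] at h
        have h2 : -(σ k y) + c ≤ (0 : ℝ) := by linarith
        simp only [Rob]; exact_mod_cast h2
  | neg φ ih =>
      intro σ k
      constructor
      · intro h
        simp only [Sat] at h
        simp only [Rob]
        simpa using EReal.neg_le_neg_iff.mpr ((ih σ k).2 h)
      · intro h
        simp only [Sat, not_not] at h
        simp only [Rob]
        simpa using EReal.neg_le_neg_iff.mpr ((ih σ k).1 h)
  | or φ ψ ih1 ih2 =>
      intro σ k
      constructor
      · intro h
        simp only [Sat] at h
        simp only [Rob]
        rcases h with h | h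
        · exact le_max_of_le_left ((ih1 σ k).1 h)
        · exact le_max_of_le_right ((ih2 σ k).1 h)
      · intro h
        simp only [Sat, not_or] at h
        exact max_le ((ih1 σ k).2 h.1) ((ih2 σ k).2 h.2)
  | next φ ih =>
      intro σ k
      exact ⟨fun h => (ih σ (k + 1)).1 h, fun h => (ih σ (k + 1)).2 h⟩
  | untl i j hij φ ψ ih1 ih2 =>
      intro σ k
      constructor
      · intro h
        simp only [Sat] at h
        obtain ⟨l, hl, hψ, hφ⟩ := h
        simp only [Rob]
        refine le_trans ?_ (le_iSup₂ l hl)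
        refine le_min ((ih2 σ l).1 hψ) (le_iInf₂ fun x hx => ?_)
        have hx' := Finset.mem_Icc.mp hx
        exact (ih1 σ x).1 (hφ x hx'.1 hx'.2)
      · intro h
        simp only [Sat] at h
        push_neg at h
        simp only [Rob]
        refine iSup₂_le fun l hl => ?_
        by_cases hψl : Sat σ ψ l
        · obtain ⟨x, hx1, hx2, hxn⟩ := h l hl hψl
          exact le_trans (min_le_right _ _)
            (le_trans (iInf₂_le x (Finset.mem_Icc.mpr ⟨hx1, hx2⟩)) ((ih1 σ x).2 hxn))
        · exact le_trans (min_le_left _ _) ((ih2 σ l).2 hψl)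

end STLpaper

open STLpaper in
/-- Completeness of the lower end of the robust satisfaction interval:
if `σ[k..|σ|−1] ∈ ⟦φ⟧_inf` then `inf(RoSI(φ,σ,k)) ≥ 0`. -/
theorem mem_infSem_RoSIinf_nonneg (Y : Type) [Fintype Y] (φ : STL Y)
    (σ : List (Y → ℝ)) (k : ℕ) (h : σ.drop k ∈ infSem φ) :
    0 ≤ RoSIinf φ σ k := by
  refine le_iInf fun σ' => ?_
  set τ : ℕ → Y → ℝ := fun n => cat σ σ' (k + n) with hτ
  have hcat : cat (σ.drop k) (fun n => τ (n + (σ.drop k).length)) = τ := by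
    funext n y
    simp only [cat, List.length_drop]
    split_ifs with h1
    · have h2 : k + n < σ.length := by omega
      simp only [hτ, cat, dif_pos h2, List.get_eq_getElem, List.getElem_drop]
    · have h3 : n - (σ.length - k) + (σ.length - k) = n := by omega
      simp only [h3]
  have hs : Sat τ φ 0 := by
    rw [← hcat]; exact h _
  have h0 := (sat_rob φ τ 0).1 hs
  rwa [hτ, rob_shift (cat σ σ') k φ 0] at h0
end

section
/- The inductively computed interval [ρ](φ,σ,k) overapproximates the robust satisfaction interval: for every STL formula φ over a finite set Y of variables, every finite signal σ = u₀,…,u_{n−1} ∈ (ℝ^Y)^*, and every k ∈ ℕ, RoSI(φ,σ,k) ⊆ [ρ](φ,σ,k); equivalently, inf([ρ](φ,σ,k)) ≤ inf(RoSI(φ,σ,k)) and sup(RoSI(φ,σ,k)) ≤ sup([ρ](φ,σ,k)). -/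
namespace STLpaper

variable {Y : Type}

lemma finRob_pointwise (σ : List (Y → ℝ)) (σ' : ℕ → Y → ℝ) (φ : STL Y) :
    ∀ k : ℕ, (finRob σ φ k).1 ≤ Rob (cat σ σ') φ k ∧
      Rob (cat σ σ') φ k ≤ (finRob σ φ k).2 := by
  induction φ with
  | top => intro k; simp [finRob, Rob]
  | gt y c =>
      intro k
      by_cases h : k < σ.length <;> simp [finRob, Rob, cat, h]
  | lt y c =>
      intro k
      by_cases h : k < σ.length <;> simp [finRob, Rob, cat, h]
  | neg φ ih =>
      intro k
      refine ⟨?_, ?_⟩ <;> simp only [finRob, Rob, EReal.neg_le_neg_iff]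
      · exact (ih k).2
      · exact (ih k).1
  | or φ ψ ihφ ihψ =>
      intro k
      exact ⟨max_le_max (ihφ k).1 (ihψ k).1, max_le_max (ihφ k).2 (ihψ k).2⟩
  | next φ ih => intro k; exact ih (k + 1)
  | untl i j hij φ ψ ihφ ihψ =>
      intro k
      constructor
      · refine iSup₂_mono fun l _ => min_le_min (ihψ l).1 ?_
        exact iInf₂_mono fun m _ => (ihφ m).1
      · refine iSup₂_mono fun l _ => min_le_min (ihψ l).2 ?_
        exact iInf₂_mono fun m _ => (ihφ m).2

end STLpaper

open STLpaper in
/-- The inductively computed interval `[ρ](φ,σ,k)` overapproximates `RoSI(φ,σ,k)`: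
`inf([ρ](φ,σ,k)) ≤ inf(RoSI(φ,σ,k))` and `sup(RoSI(φ,σ,k)) ≤ sup([ρ](φ,σ,k))`. -/
theorem RoSI_subset_finRob (Y : Type) [Fintype Y] (φ : STL Y)
    (σ : List (Y → ℝ)) (k : ℕ) :
    (finRob σ φ k).1 ≤ RoSIinf φ σ k ∧ RoSIsup φ σ k ≤ (finRob σ φ k).2 := by
  exact ⟨le_iInf fun σ' => (finRob_pointwise σ σ' φ k).1,
    iSup_le fun σ' => (finRob_pointwise σ σ' φ k).2⟩
end

section
/- Upper bound for the robust satisfaction interval of the until operator: for all STL formulas φ, φ' over a finite set Y of variables, every finite signal σ ∈ (ℝ^Y)^*, every k ∈ ℕ, and all i,j ∈ ℕ ∪ {+∞} with i ≤ j, sup(RoSI(φ U_{[i,j]} φ', σ, k)) ≤ sup_{l∈{k+i,…,k+j}} min( sup(RoSI(φ',σ,l)), min_{m∈{k,…,l}} sup(RoSI(φ,σ,m)) ). -/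
open STLpaper in
/-- Upper bound for the robust satisfaction interval of the until operator. -/
theorem RoSIsup_until_le (Y : Type) [Fintype Y] (φ φ' : STL Y) (σ : List (Y → ℝ))
    (k : ℕ) (i j : ℕ∞) (hij : i ≤ j) :
    RoSIsup (STL.untl i j hij φ φ') σ k ≤
      ⨆ l ∈ {l : ℕ | (k : ℕ∞) + i ≤ (l : ℕ∞) ∧ (l : ℕ∞) ≤ (k : ℕ∞) + j},
        min (RoSIsup φ' σ l) (⨅ m ∈ Finset.Icc k l, RoSIsup φ σ m) := by
  rw [RoSIsup]
  apply iSup_le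
  intro σ'
  show (⨆ l ∈ {l : ℕ | (k : ℕ∞) + i ≤ (l : ℕ∞) ∧ (l : ℕ∞) ≤ (k : ℕ∞) + j},
        min (Rob (cat σ σ') φ' l) (⨅ m ∈ Finset.Icc k l, Rob (cat σ σ') φ m)) ≤ _
  apply iSup_le; intro l
  apply iSup_le; intro hl
  refine le_trans ?_ (le_iSup₂ (f := fun l (_ : l ∈ {l : ℕ | (k : ℕ∞) + i ≤ (l : ℕ∞) ∧ (l : ℕ∞) ≤ (k : ℕ∞) + j}) => min (RoSIsup φ' σ l) (⨅ m ∈ Finset.Icc k l, RoSIsup φ σ m)) l hl)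
  apply min_le_min
  · exact le_iSup (fun τ => Rob (cat σ τ) φ' l) σ'
  · exact iInf₂_mono fun m _ => le_iSup (fun τ => Rob (cat σ τ) φ m) σ'
end

section
/- Lower bound for the robust satisfaction interval of the until operator: for all STL formulas φ, φ' over a finite set Y of variables, every finite signal σ ∈ (ℝ^Y)^*, every k ∈ ℕ, and all i,j ∈ ℕ ∪ {+∞} with i ≤ j, inf(RoSI(φ U_{[i,j]} φ', σ, k)) ≥ sup_{l∈{k+i,…,k+j}} min( inf(RoSI(φ',σ,l)), min_{m∈{k,…,l}} inf(RoSI(φ,σ,m)) ). -/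
open STLpaper in
/-- Lower bound for the robust satisfaction interval of the until operator. -/
theorem RoSIinf_until_ge (Y : Type) [Fintype Y] (φ φ' : STL Y) (σ : List (Y → ℝ))
    (k : ℕ) (i j : ℕ∞) (hij : i ≤ j) :
    (⨆ l ∈ {l : ℕ | (k : ℕ∞) + i ≤ (l : ℕ∞) ∧ (l : ℕ∞) ≤ (k : ℕ∞) + j},
        min (RoSIinf φ' σ l) (⨅ m ∈ Finset.Icc k l, RoSIinf φ σ m)) ≤
      RoSIinf (STL.untl i j hij φ φ') σ k := by
  rw [RoSIinf]
  refine le_iInf fun σ' => ?_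
  show _ ≤ Rob (cat σ σ') (STL.untl i j hij φ φ') k
  rw [Rob]
  refine iSup₂_mono fun l hl => min_le_min ?_ ?_
  · exact iInf_le _ σ'
  · exact iInf₂_mono fun m hm => iInf_le _ σ'
end
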